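/- arXiv:1808.02838 — 2 statements merged into one kernel-verified Lean document; each statement's English description precedes it below -/
import Mathlib

section
/- Theorem 1: Let B ≥ 1, λ > 0, and let r : Fin B → ℝ be any vector of strictly positive rates with ∑_i r i = N (the batch assignment: batch i is hosted by r i workers). Let μ_r be the product measure on (Fin B → ℝ) whose i-th factor is the exponential distribution with rate λ · r i, and define T(r) = ∫ (sup_i x i) dμ_r(x). Then T(r) ≥ T(c), where c is the balanced assignment with every entry equal to N/B; that is, among all assignments of N workers to B non-overlapping batches, the balanced assignment achieves the minimum expected overall service time. -/
open Finset MeasureTheory ProbabilityTheory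

section Aux

open Real Set

lemma expMeasure_Iio_zero' {ρ : ℝ} : expMeasure ρ (Set.Iio 0) = 0 := by
  rw [expMeasure, gammaMeasure, withDensity_apply _ measurableSet_Iio]
  exact lintegral_exponentialPDF_of_nonpos le_rfl

lemma expMeasure_Iic' {ρ t : ℝ} (hρ : 0 < ρ) (ht : 0 ≤ t) :
    expMeasure ρ (Set.Iic t) = ENNReal.ofReal (1 - Real.exp (-(ρ * t))) := by
  rw [expMeasure, gammaMeasure, withDensity_apply _ measurableSet_Iic]
  rw [show (fun x => gammaPDF 1 ρ x) = exponentialPDF ρ from rfl]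
  rw [lintegral_exponentialPDF_eq_antiDeriv hρ, if_pos ht]

lemma pi_map_eval' {ι : Type*} [Fintype ι] {α : ι → Type*} [∀ i, MeasurableSpace (α i)]
    (μ : ∀ i, Measure (α i)) [∀ i, IsProbabilityMeasure (μ i)] (i : ι) :
    (Measure.pi μ).map (Function.eval i) = μ i := by
  classical
  ext s hs
  rw [Measure.map_apply (measurable_pi_apply i) hs, ← Set.univ_pi_update_univ, Measure.pi_pi]
  rw [Finset.prod_eq_single_of_mem i (Finset.mem_univ i)
    (fun j _ hj => by simp [Function.update_of_ne hj])]
  simp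

lemma exp_moment_lt_top' {ρ : ℝ} (hρ : 0 < ρ) :
    ∫⁻ t, ENNReal.ofReal t ∂(expMeasure ρ) < ⊤ := by
  have hm : Measurable (gammaPDF 1 ρ) := (measurable_gammaPDFReal 1 ρ).ennreal_ofReal
  rw [expMeasure, gammaMeasure,
    lintegral_withDensity_eq_lintegral_mul _ hm ENNReal.measurable_ofReal]
  set g : ℝ → ℝ := (Set.Ici 0).indicator (fun t => ρ * Real.exp (-(ρ * t)) * t) with hg
  have hbase : IntegrableOn (fun t => ρ * Real.exp (-(ρ * t)) * t) (Set.Ioi 0) := by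
    have h := integrableOn_rpow_mul_exp_neg_mul_rpow (p := 1) (s := 1) (by norm_num) zero_lt_one hρ
    have h2 : IntegrableOn (fun x : ℝ => x * Real.exp (-(ρ * x))) (Set.Ioi 0) := by
      refine h.congr_fun (fun x hx => ?_) measurableSet_Ioi
      simp [Real.rpow_one, neg_mul]
    have h3 : IntegrableOn (fun x : ℝ => ρ * (x * Real.exp (-(ρ * x)))) (Set.Ioi 0) :=
      h2.const_mul ρ
    exact h3.congr_fun (fun x hx => by ring) measurableSet_Ioi
  have hint : Integrable g := by
    rw [hg, integrable_indicator_iff measurableSet_Ici]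
    exact Iff.mpr integrableOn_Ici_iff_integrableOn_Ioi hbase
  calc ∫⁻ t, ((gammaPDF 1 ρ) * fun t => ENNReal.ofReal t) t
      ≤ ∫⁻ t, ENNReal.ofReal (g t) := by
        apply lintegral_mono
        intro t
        simp only [Pi.mul_apply]
        rcases lt_or_ge t 0 with h | h
        · rw [show gammaPDF 1 ρ t = exponentialPDF ρ t from rfl,
            exponentialPDF_of_neg h]
          simp
        · rw [show gammaPDF 1 ρ t = exponentialPDF ρ t from rfl,
            exponentialPDF_of_nonneg h, ← ENNReal.ofReal_mul (by positivity)]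
          exact ENNReal.ofReal_le_ofReal
            (le_of_eq (by rw [hg, Set.indicator_of_mem (Set.mem_Ici.2 h)]))
    _ < ⊤ := hint.lintegral_lt_top

lemma key_real_ineq' (B : ℕ) (hB : 1 ≤ B) (a : ℝ) (ha : 0 < a) (r : Fin B → ℝ)
    (hr : ∀ i, 0 < r i) :
    ∏ i, (1 - Real.exp (-(a * r i))) ≤ (1 - Real.exp (-(a * ((∑ i, r i) / B)))) ^ B := by
  have hBpos : (0:ℝ) < B := by exact_mod_cast hB
  set z : Fin B → ℝ := fun i => 1 - Real.exp (-(a * r i)) with hz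
  have hz_nonneg : ∀ i, 0 ≤ z i := fun i => by
    have h1 : Real.exp (-(a * r i)) ≤ 1 :=
      Real.exp_le_one_iff.2 (neg_nonpos.2 (le_of_lt (mul_pos ha (hr i))))
    simp only [hz, sub_nonneg]
    exact h1
  set w : Fin B → ℝ := fun _ => 1 / B with hw
  have hw_nonneg : ∀ i ∈ Finset.univ, (0:ℝ) ≤ w i := fun i _ => by positivity
  have hw_sum : ∑ i : Fin B, w i = 1 := by
    simp only [hw, Finset.sum_const, Finset.card_univ, Fintype.card_fin, nsmul_eq_mul]
    field_simp
  have hamgm := Real.geom_mean_le_arith_mean_weighted Finset.univ w z hw_nonneg hw_sum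
    (fun i _ => hz_nonneg i)
  have hjensen := convexOn_exp.map_sum_le (t := Finset.univ) (w := w)
    (p := fun i => -(a * r i)) hw_nonneg hw_sum (fun i _ => Set.mem_univ _)
  simp only [smul_eq_mul] at hjensen
  have hsum_eq : ∑ i, w i * (-(a * r i)) = -(a * ((∑ i, r i) / B)) := by
    simp only [hw]
    rw [← Finset.mul_sum, Finset.sum_neg_distrib, ← Finset.mul_sum]
    field_simp
  rw [hsum_eq] at hjensen
  set s := (∑ i, r i) / B with hs
  have hchain : ∏ i, z i ^ w i ≤ 1 - Real.exp (-(a * s)) := by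
    refine hamgm.trans ?_
    have : ∑ i, w i * z i = 1 - ∑ i, w i * Real.exp (-(a * r i)) := by
      simp only [hz, mul_sub, Finset.sum_sub_distrib, mul_one, hw_sum]
    rw [this]
    linarith [hjensen]
  have hprod_eq : ∏ i, z i = (∏ i, z i ^ w i) ^ B := by
    rw [← Finset.prod_pow]
    refine Finset.prod_congr rfl fun i _ => ?_
    rw [← Real.rpow_natCast (z i ^ w i) B, ← Real.rpow_mul (hz_nonneg i)]
    rw [show w i * (B:ℝ) = 1 by simp [hw]; field_simp]
    exact (Real.rpow_one _).symm
  rw [hprod_eq]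
  exact pow_le_pow_left₀ (Finset.prod_nonneg fun i _ => Real.rpow_nonneg (hz_nonneg i) _)
    hchain B

variable {B : ℕ} (ρ : Fin B → ℝ)

lemma pi_exp_ae_nonneg (hρ : ∀ i, 0 < ρ i) :
    ∀ᵐ x ∂(Measure.pi fun i => expMeasure (ρ i)), ∀ i, 0 ≤ x i := by
  haveI : ∀ i, IsProbabilityMeasure (expMeasure (ρ i)) :=
    fun i => isProbabilityMeasure_expMeasure (hρ i)
  refine ae_all_iff.2 fun i => ?_
  rw [ae_iff]
  have hset : {x : Fin B → ℝ | ¬ 0 ≤ x i} = Function.eval i ⁻¹' (Set.Iio 0) := by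
    ext x; simp [not_le]
  rw [hset]
  exact Measure.pi_eval_preimage_null (μ := fun i => expMeasure (ρ i)) expMeasure_Iio_zero'

lemma pi_exp_survival (hB : 1 ≤ B) (hρ : ∀ i, 0 < ρ i) {t : ℝ} (ht : 0 ≤ t) :
    (Measure.pi fun i => expMeasure (ρ i)) {x | t < ⨆ i, x i}
      = 1 - ∏ i, ENNReal.ofReal (1 - Real.exp (-(ρ i * t))) := by
  haveI : Nonempty (Fin B) := Fin.pos_iff_nonempty.mp hB
  haveI : ∀ i, IsProbabilityMeasure (expMeasure (ρ i)) :=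
    fun i => isProbabilityMeasure_expMeasure (hρ i)
  have hset : {x : Fin B → ℝ | t < ⨆ i, x i} = {x : Fin B → ℝ | (⨆ i, x i) ≤ t}ᶜ := by
    ext x; simp [not_le]
  have hset2 : {x : Fin B → ℝ | (⨆ i, x i) ≤ t} = Set.pi Set.univ (fun _ => Set.Iic t) := by
    ext x
    simp only [Set.mem_setOf_eq, Set.mem_univ_pi, Set.mem_Iic]
    exact ciSup_le_iff (Set.Finite.bddAbove (Set.finite_range x))
  rw [hset, measure_compl (hset2 ▸ (MeasurableSet.univ_pi fun _ => measurableSet_Iic))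
    (measure_ne_top _ _), measure_univ, hset2, Measure.pi_pi]
  congr 1
  exact Finset.prod_congr rfl fun i _ => expMeasure_Iic' (hρ i) ht

lemma pi_exp_lintegral_sup_lt_top (hρ : ∀ i, 0 < ρ i) :
    ∫⁻ x, ENNReal.ofReal (⨆ i, x i) ∂(Measure.pi fun i => expMeasure (ρ i)) < ⊤ := by
  haveI : ∀ i, IsProbabilityMeasure (expMeasure (ρ i)) :=
    fun i => isProbabilityMeasure_expMeasure (hρ i)
  calc ∫⁻ x, ENNReal.ofReal (⨆ i, x i) ∂(Measure.pi fun i => expMeasure (ρ i))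
      ≤ ∫⁻ x, ∑ i, ENNReal.ofReal (x i) ∂(Measure.pi fun i => expMeasure (ρ i)) := by
        refine lintegral_mono_ae ((pi_exp_ae_nonneg ρ hρ).mono fun x hx => ?_)
        have h1 : (⨆ i, x i) ≤ ∑ i, x i := by
          rcases isEmpty_or_nonempty (Fin B) with h | h
          · simp [iSup_of_empty']
          exact ciSup_le fun i => Finset.single_le_sum (fun j _ => hx j) (Finset.mem_univ i)
        calc ENNReal.ofReal (⨆ i, x i) ≤ ENNReal.ofReal (∑ i, x i) :=
              ENNReal.ofReal_le_ofReal h1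
          _ = ∑ i, ENNReal.ofReal (x i) := ENNReal.ofReal_sum_of_nonneg fun i _ => hx i
    _ = ∑ i, ∫⁻ x, ENNReal.ofReal (x i) ∂(Measure.pi fun i => expMeasure (ρ i)) :=
        lintegral_finset_sum _ fun i _ => (measurable_pi_apply i).ennreal_ofReal
    _ < ⊤ := by
        refine ENNReal.sum_lt_top.2 fun i _ => ?_
        have h := exp_moment_lt_top' (hρ i)
        rw [← pi_map_eval' (fun j => expMeasure (ρ j)) i,
          lintegral_map ENNReal.measurable_ofReal (measurable_pi_apply i)] at h
        exact h

end Aux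

/-- Theorem 1: among all assignments of `N` workers to `B` non-overlapping batches
(`r i` workers host batch `i`, `∑ i, r i = N`, all entries positive), the balanced
assignment with every entry `N / B` achieves the minimum expected overall service
time, i.e. the minimum expectation of the maximum of the `B` independent exponential
batch recovery times with rates `λ ⬝ r i`. -/
theorem balanced_assignment_minimizes_expected_service_time (B : ℕ) (hB : 1 ≤ B)
    (lam N : ℝ) (hlam : 0 < lam) (r : Fin B → ℝ)
    (hr : ∀ i, 0 < r i) (hsum : ∑ i, r i = N) :
    ∫ x, (⨆ i, x i) ∂(Measure.pi fun _ : Fin B => expMeasure (lam * (N / B)))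
      ≤ ∫ x, (⨆ i, x i) ∂(Measure.pi fun i => expMeasure (lam * r i)) := by
  haveI : Nonempty (Fin B) := Fin.pos_iff_nonempty.mp hB
  have hBpos : (0:ℝ) < B := by exact_mod_cast hB
  have hN : 0 < N := hsum ▸ Finset.sum_pos (fun i _ => hr i) Finset.univ_nonempty
  have hc : 0 < lam * (N / B) := by positivity
  have hρr : ∀ i, 0 < lam * r i := fun i => mul_pos hlam (hr i)
  set ρc : Fin B → ℝ := fun _ => lam * (N / B) with hρc
  set ρr : Fin B → ℝ := fun i => lam * r i with hρr'
  set μc := Measure.pi fun i : Fin B => expMeasure (ρc i) with hμc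
  set μr := Measure.pi fun i : Fin B => expMeasure (ρr i) with hμr
  haveI : ∀ i : Fin B, IsProbabilityMeasure (expMeasure (ρc i)) :=
    fun i => isProbabilityMeasure_expMeasure hc
  haveI : ∀ i : Fin B, IsProbabilityMeasure (expMeasure (ρr i)) :=
    fun i => isProbabilityMeasure_expMeasure (hρr i)
  have hF : Measurable fun x : Fin B → ℝ => ⨆ i, x i :=
    Measurable.iSup fun i => measurable_pi_apply i
  -- a.e. nonnegativity of the sup
  have hsup_nn : ∀ (x : Fin B → ℝ), (∀ i, 0 ≤ x i) → 0 ≤ ⨆ i, x i := fun x hx =>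
    le_trans (hx (Classical.arbitrary _))
      (le_ciSup (Set.Finite.bddAbove (Set.finite_range x)) _)
  have hnnc : 0 ≤ᵐ[μc] fun x => ⨆ i, x i :=
    (pi_exp_ae_nonneg ρc fun _ => hc).mono fun x hx => hsup_nn x hx
  have hnnr : 0 ≤ᵐ[μr] fun x => ⨆ i, x i :=
    (pi_exp_ae_nonneg ρr hρr).mono fun x hx => hsup_nn x hx
  rw [integral_eq_lintegral_of_nonneg_ae hnnc hF.aestronglyMeasurable,
    integral_eq_lintegral_of_nonneg_ae hnnr hF.aestronglyMeasurable]
  have hfin : ∫⁻ x, ENNReal.ofReal (⨆ i, x i) ∂μr < ⊤ :=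
    pi_exp_lintegral_sup_lt_top ρr hρr
  refine ENNReal.toReal_mono hfin.ne ?_
  rw [MeasureTheory.lintegral_eq_lintegral_meas_lt μc hnnc hF.aemeasurable,
    MeasureTheory.lintegral_eq_lintegral_meas_lt μr hnnr hF.aemeasurable]
  refine lintegral_mono_ae ((ae_restrict_iff' measurableSet_Ioi).2 (ae_of_all _ fun t ht => ?_))
  have ht : (0:ℝ) < t := ht
  rw [pi_exp_survival ρc hB (fun _ => hc) ht.le, pi_exp_survival ρr hB hρr ht.le]
  refine tsub_le_tsub_left ?_ 1
  -- reduce to the real product inequality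
  have hz_nn : ∀ i : Fin B, 0 ≤ 1 - Real.exp (-(ρr i * t)) := fun i => by
    have : Real.exp (-(ρr i * t)) ≤ 1 :=
      Real.exp_le_one_iff.2 (neg_nonpos.2 (le_of_lt (mul_pos (hρr i) ht)))
    linarith
  have hZ_nn : (0:ℝ) ≤ 1 - Real.exp (-(ρc (Classical.arbitrary _) * t)) := by
    have : Real.exp (-(lam * (N / B) * t)) ≤ 1 :=
      Real.exp_le_one_iff.2 (neg_nonpos.2 (le_of_lt (mul_pos hc ht)))
    simp only [hρc]
    linarith
  have hkey := key_real_ineq' B hB (lam * t) (mul_pos hlam ht) r hr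
  calc ∏ i, ENNReal.ofReal (1 - Real.exp (-(ρr i * t)))
      = ∏ i, ENNReal.ofReal (1 - Real.exp (-(lam * t * r i))) :=
        Finset.prod_congr rfl fun i _ => by rw [show ρr i * t = lam * t * r i by rw [hρr']; ring]
    _ = ENNReal.ofReal (∏ i, (1 - Real.exp (-(lam * t * r i)))) := by
        rw [ENNReal.ofReal_prod_of_nonneg fun i _ => by
          have : Real.exp (-(lam * t * r i)) ≤ 1 :=
            Real.exp_le_one_iff.2 (neg_nonpos.2
              (mul_nonneg (mul_nonneg hlam.le ht.le) (hr i).le))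
          linarith]
    _ ≤ ENNReal.ofReal ((1 - Real.exp (-(lam * t * ((∑ i, r i) / B)))) ^ B) :=
        ENNReal.ofReal_le_ofReal hkey
    _ = ∏ _i : Fin B, ENNReal.ofReal (1 - Real.exp (-(ρc (Classical.arbitrary _) * t))) := by
        rw [Finset.prod_const, Finset.card_univ, Fintype.card_fin, ← ENNReal.ofReal_pow]
        · congr 2
          rw [hsum, hρc]
          ring_nf
        · have h1 : 0 < (∑ i, r i) / (B:ℝ) := by rw [hsum]; positivity
          have : Real.exp (-(lam * t * ((∑ i, r i) / B))) ≤ 1 :=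
            Real.exp_le_one_iff.2 (neg_nonpos.2
              (mul_nonneg (mul_nonneg hlam.le ht.le) h1.le))
          linarith
    _ = ∏ i, ENNReal.ofReal (1 - Real.exp (-(ρc i * t))) := rfl
end

section
/- Let X, Y, Z be i.i.d. exponential random variables with rate λ > 0 (formally, let μ be the product on (Fin 3 → ℝ) of three copies of the exponential distribution with rate λ, and write X, Y, Z for the three coordinate functions). Then E[max(X, min(Y, Z))] < E[max(X, Y)]. -/
open MeasureTheory ProbabilityTheory Real Set

private lemma abs_max_le_add (a b : ℝ) : |max a b| ≤ |a| + |b| := by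
  rcases le_total a b with h | h
  · rw [max_eq_right h]
    have := abs_nonneg a; linarith
  · rw [max_eq_left h]
    have := abs_nonneg b; linarith

private lemma abs_min_le_add (a b : ℝ) : |min a b| ≤ |a| + |b| := by
  rcases le_total a b with h | h
  · rw [min_eq_left h]
    have := abs_nonneg b; linarith
  · rw [min_eq_right h]
    have := abs_nonneg a; linarith

private lemma measurable_expPDF (r : ℝ) : Measurable (exponentialPDF r) :=
  ENNReal.measurable_ofReal.comp (measurable_exponentialPDFReal r)

private lemma expMeasure_eq (r : ℝ) :
    expMeasure r = MeasureTheory.volume.withDensity (exponentialPDF r) := rfl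

/-- `id` is integrable w.r.t. the exponential measure. -/
private lemma integrable_id_expMeasure {lam : ℝ} (hlam : 0 < lam) :
    Integrable (fun x : ℝ => x) (expMeasure lam) := by
  rw [expMeasure_eq, integrable_withDensity_iff (measurable_expPDF lam)
    (Filter.Eventually.of_forall fun x => ENNReal.ofReal_lt_top)]
  rw [← integrableOn_univ, ← Set.Iic_union_Ioi (a := (0 : ℝ))]
  apply IntegrableOn.union
  · have : EqOn (fun x : ℝ => x * (exponentialPDF lam x).toReal) 0 (Set.Iic 0) := by
      intro x hx
      have hx' : x ≤ 0 := hx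
      rcases lt_or_eq_of_le hx' with h | h
      · simp [exponentialPDF_of_neg h]
      · simp [h]
    exact (integrableOn_congr_fun this measurableSet_Iic).mpr (integrableOn_zero)
  · have h1 : IntegrableOn (fun x : ℝ => x ^ (1 : ℝ) * rexp (-lam * x ^ (1 : ℝ)))
        (Set.Ioi 0) := integrableOn_rpow_mul_exp_neg_mul_rpow (by norm_num) zero_lt_one hlam
    have h2 := h1.const_mul lam
    apply (integrableOn_congr_fun ?_ measurableSet_Ioi).mpr h2
    intro x hx
    have hx' : (0 : ℝ) ≤ x := le_of_lt hx
    simp only [rpow_one]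
    rw [exponentialPDF_of_nonneg hx', ENNReal.toReal_ofReal
      (by positivity)]
    ring_nf

private lemma map_eval_pi {lam : ℝ} (hlam : 0 < lam) (i : Fin 3) :
    (Measure.pi fun _ : Fin 3 => expMeasure lam).map (Function.eval i) = expMeasure lam := by
  haveI : IsProbabilityMeasure (expMeasure lam) := isProbabilityMeasure_expMeasure hlam
  haveI : ∀ j : Fin 3, IsProbabilityMeasure ((fun _ : Fin 3 => expMeasure lam) j) :=
    fun _ => isProbabilityMeasure_expMeasure hlam
  ext s hs
  rw [Measure.map_apply (measurable_pi_apply i) hs, ← Set.univ_pi_update_univ, Measure.pi_pi]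
  rw [Finset.prod_eq_single i]
  · simp
  · intro b _ hb
    simp [Function.update_apply, hb]
  · simp

private lemma integrable_eval {lam : ℝ} (hlam : 0 < lam) (i : Fin 3) :
    Integrable (fun x : Fin 3 → ℝ => x i) (Measure.pi fun _ : Fin 3 => expMeasure lam) := by
  have h := integrable_id_expMeasure hlam
  rw [← map_eval_pi hlam i] at h
  exact (integrable_map_measure h.aestronglyMeasurable
    (measurable_pi_apply i).aemeasurable).mp h

private lemma expMeasure_Ioo_pos {lam a b : ℝ} (hlam : 0 < lam) (ha : 0 ≤ a) (hab : a < b) :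
    0 < expMeasure lam (Set.Ioo a b) := by
  rw [pos_iff_ne_zero, expMeasure_eq]
  intro h
  rw [withDensity_apply_eq_zero (measurable_expPDF lam)] at h
  have hsub : Set.Ioo a b ⊆ {x | exponentialPDF lam x ≠ 0} ∩ Set.Ioo a b := by
    intro x hx
    refine ⟨?_, hx⟩
    have hxpos : 0 < x := lt_of_le_of_lt ha hx.1
    simp only [Set.mem_setOf_eq, exponentialPDF_of_nonneg hxpos.le, ne_eq,
      ENNReal.ofReal_eq_zero, not_le]
    positivity
  have := measure_mono_null hsub h
  rw [Real.volume_Ioo] at this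
  simp only [ENNReal.ofReal_eq_zero] at this
  linarith

/-- For i.i.d. exponential random variables `X, Y, Z` with rate `λ > 0` (coordinates of the
product of three exponential distributions), `E[max(X, min(Y, Z))] < E[max(X, Y)]`. -/
theorem exp_max_min_lt_max (lam : ℝ) (hlam : 0 < lam) :
    ∫ x : Fin 3 → ℝ, max (x 0) (min (x 1) (x 2))
        ∂(Measure.pi fun _ : Fin 3 => expMeasure lam)
      < ∫ x : Fin 3 → ℝ, max (x 0) (x 1)
        ∂(Measure.pi fun _ : Fin 3 => expMeasure lam) := by
  haveI : ∀ j : Fin 3, IsProbabilityMeasure ((fun _ : Fin 3 => expMeasure lam) j) :=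
    fun _ => isProbabilityMeasure_expMeasure hlam
  set μ : Measure (Fin 3 → ℝ) := Measure.pi fun _ : Fin 3 => expMeasure lam with hμ
  set f : (Fin 3 → ℝ) → ℝ := fun x => max (x 0) (min (x 1) (x 2)) with hf
  set g : (Fin 3 → ℝ) → ℝ := fun x => max (x 0) (x 1) with hg
  have hmf : Measurable f :=
    (measurable_pi_apply 0).max ((measurable_pi_apply 1).min (measurable_pi_apply 2))
  have hmg : Measurable g := (measurable_pi_apply 0).max (measurable_pi_apply 1)
  have hbound : Integrable (fun x : Fin 3 → ℝ => |x 0| + |x 1| + |x 2|) μ :=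
    ((integrable_eval hlam 0).abs.add (integrable_eval hlam 1).abs).add
      (integrable_eval hlam 2).abs
  have hif : Integrable f μ := by
    refine hbound.mono' hmf.aestronglyMeasurable (Filter.Eventually.of_forall fun x => ?_)
    simp only [Real.norm_eq_abs, hf]
    calc |max (x 0) (min (x 1) (x 2))| ≤ |x 0| + |min (x 1) (x 2)| := abs_max_le_add _ _
      _ ≤ |x 0| + (|x 1| + |x 2|) := by linarith [abs_min_le_add (x 1) (x 2)]
      _ = |x 0| + |x 1| + |x 2| := by ring
  have hig : Integrable g μ := by
    refine hbound.mono' hmg.aestronglyMeasurable (Filter.Eventually.of_forall fun x => ?_)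
    simp only [Real.norm_eq_abs, hg]
    calc |max (x 0) (x 1)| ≤ |x 0| + |x 1| := abs_max_le_add _ _
      _ ≤ |x 0| + |x 1| + |x 2| := by linarith [abs_nonneg (x 2)]
  have hle : ∀ x, f x ≤ g x := fun x => max_le_max le_rfl (min_le_left _ _)
  have hipos : 0 < ∫ x, (g x - f x) ∂μ := by
    rw [integral_pos_iff_support_of_nonneg (fun x => sub_nonneg.mpr (hle x)) (hig.sub hif)]
    set s : Fin 3 → Set ℝ := fun i => if i = 1 then Set.Ioo 2 3 else Set.Ioo 0 1 with hs
    have hsub : Set.univ.pi s ⊆ Function.support (fun x => g x - f x) := by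
      intro x hx
      have h0 := hx 0 (Set.mem_univ _)
      have h1 := hx 1 (Set.mem_univ _)
      have h2 := hx 2 (Set.mem_univ _)
      simp only [hs] at h0 h1 h2
      norm_num [Set.mem_Ioo] at h0 h1 h2
      have h2' : x 2 ∈ Set.Ioo (0:ℝ) 1 := by
        rwa [if_neg (by decide : ¬ ((2:Fin 3) = 1))] at h2
      obtain ⟨h2a, h2b⟩ := h2'
      have hgx : g x = x 1 := max_eq_right (by linarith)
      have hfx : f x < x 1 := by
        simp only [hf]
        apply max_lt (by linarith)
        exact lt_of_le_of_lt (min_le_right _ _) (by linarith)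
      simp only [Function.mem_support, hgx]
      intro hcon
      have : f x = x 1 := by linarith [sub_eq_zero.mp hcon]
      linarith
    refine lt_of_lt_of_le ?_ (measure_mono hsub)
    rw [hμ, Measure.pi_pi]
    rw [pos_iff_ne_zero]
    apply Finset.prod_ne_zero_iff.mpr
    intro i _
    fin_cases i <;> simp only [hs] <;> norm_num <;>
      exact (expMeasure_Ioo_pos hlam (by norm_num) (by norm_num)).ne'
  have := integral_sub hig hif
  rw [this] at hipos
  linarith
end
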